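/- Neyman orthogonality: in the partially linear network model with ε^Y, ε^T, A.mulVec ∘ ε^T square-integrable, let m, ℓ : Ω → EuclideanSpace ℝ (Fin n) be 𝒢-measurable and square-integrable. Then both coordinates of the map f : ℝ → ℝ², f(r) = E[ψ(θ₀, α₀, m₀ + r•(m − m₀), ℓ₀ + r•(ℓ − ℓ₀))], have derivative 0 at r = 0. -/

import Mathlib

open MeasureTheory ProbabilityTheory Filter
open scoped RealInnerProductSpace ENNReal

set_option linter.unusedSectionVars false
set_option maxHeartbeats 1000000

section NeymanAux

variable {Ω : Type*} {m m0 : MeasurableSpace Ω} {P : Measure Ω} [IsProbabilityMeasure P] {n : ℕ}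

/-- Conditional expectation commutes with continuous linear maps. -/
lemma condexp_comp_clm {E F : Type*}
    [NormedAddCommGroup E] [NormedSpace ℝ E] [CompleteSpace E]
    [NormedAddCommGroup F] [NormedSpace ℝ F] [CompleteSpace F]
    (hm : m ≤ m0) (L : E →L[ℝ] F) {f : Ω → E} (hf : Integrable f P) :
    P[fun ω => L (f ω)|m] =ᵐ[P] fun ω => L ((P[f|m]) ω) := by
  refine (ae_eq_condExp_of_forall_setIntegral_eq hm (L.integrable_comp hf) ?_ ?_ ?_).symm
  · intro s _ _
    exact (L.integrable_comp (integrable_condExp (m := m))).integrableOn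
  · intro s hs _
    rw [L.integral_comp_comm (integrable_condExp.integrableOn),
      L.integral_comp_comm hf.integrableOn, setIntegral_condExp hm hf hs]
  · exact (L.continuous.comp_stronglyMeasurable
      (stronglyMeasurable_condExp (m := m))).aestronglyMeasurable

lemma integrable_inner_of_memL2 {E : Type*} [NormedAddCommGroup E] [InnerProductSpace ℝ E]
    {f g : Ω → E} (hf : MemLp f 2 P) (hg : MemLp g 2 P) :
    Integrable (fun ω => ⟪f ω, g ω⟫) P := by
  have h := L2.integrable_inner (𝕜 := ℝ) (hf.toLp f) (hg.toLp g)
  refine h.congr ?_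
  filter_upwards [hf.coeFn_toLp, hg.coeFn_toLp] with ω h1 h2
  rw [h1, h2]

lemma euclidean_coord_le_norm (x : EuclideanSpace ℝ (Fin n)) (i : Fin n) : |x i| ≤ ‖x‖ := by
  have h1 : ‖x i‖ ^ 2 ≤ ∑ j, ‖x j‖ ^ 2 :=
    Finset.single_le_sum (fun j _ => sq_nonneg ‖x j‖) (Finset.mem_univ i)
  calc |x i| = Real.sqrt (‖x i‖ ^ 2) := by
        rw [Real.sqrt_sq (norm_nonneg _)]; exact (Real.norm_eq_abs _).symm
    _ ≤ Real.sqrt (∑ j, ‖x j‖ ^ 2) := Real.sqrt_le_sqrt h1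
    _ = ‖x‖ := (EuclideanSpace.norm_eq x).symm

/-- If `h` is bounded and `m`-measurable and `E[e|m] = 0`, then `E⟪h,e⟫ = 0`. -/
lemma integral_inner_bdd_zero (hm : m ≤ m0)
    {h e : Ω → EuclideanSpace ℝ (Fin n)} (hh : StronglyMeasurable[m] h)
    {C : ℝ} (hC : ∀ ω, ‖h ω‖ ≤ C) (he : Integrable e P) (he0 : P[e|m] =ᵐ[P] 0) :
    (∫ ω, ⟪h ω, e ω⟫ ∂P) = 0 := by
  have hinteq : ∀ ω, ⟪h ω, e ω⟫ = ∑ i, h ω i * e ω i := by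
    intro ω
    simp [PiLp.inner_apply, RCLike.inner_apply]
    exact Finset.sum_congr rfl fun _ _ => mul_comm _ _
  have hint : ∀ i : Fin n, Integrable (fun ω => h ω i * e ω i) P := by
    intro i
    refine (he.norm.const_mul C).mono' ?_ (Eventually.of_forall fun ω => ?_)
    · exact ((((EuclideanSpace.proj (𝕜 := ℝ) i)).continuous.comp_stronglyMeasurable
        (hh.mono hm)).aestronglyMeasurable.mul
        (((EuclideanSpace.proj (𝕜 := ℝ) i)).continuous.comp_aestronglyMeasurable he.1))
    · have h1 : |h ω i| ≤ C := (euclidean_coord_le_norm (h ω) i).trans (hC ω)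
      have h2 : |e ω i| ≤ ‖e ω‖ := euclidean_coord_le_norm (e ω) i
      have hC0 : 0 ≤ C := le_trans (norm_nonneg _) (hC ω)
      calc ‖h ω i * e ω i‖ = |h ω i| * |e ω i| := by rw [norm_mul]; rfl
        _ ≤ C * ‖e ω‖ := mul_le_mul h1 h2 (abs_nonneg _) hC0
  have hzero : ∀ i : Fin n, (∫ ω, h ω i * e ω i ∂P) = 0 := by
    intro i
    have hhi : StronglyMeasurable[m] (fun ω => h ω i) :=
      (EuclideanSpace.proj (𝕜 := ℝ) i).continuous.comp_stronglyMeasurable hh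
    have hei0 : P[fun ω => e ω i|m] =ᵐ[P] 0 := by
      have h1 := condexp_comp_clm hm (EuclideanSpace.proj (𝕜 := ℝ) i) he
      refine h1.trans ?_
      filter_upwards [he0] with ω hω
      simp [hω]
    have hpull := condExp_mul_of_stronglyMeasurable_left hhi
      (by simpa [Pi.mul_def] using hint i)
      (((EuclideanSpace.proj (𝕜 := ℝ) i)).integrable_comp he)
    rw [← integral_condExp hm]
    have h2 : P[(fun ω => h ω i) * (fun ω => e ω i)|m] =ᵐ[P] 0 := by
      refine hpull.trans ?_
      filter_upwards [hei0] with ω hω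
      simp [Pi.mul_apply, hω]
    rw [integral_congr_ae (by simpa [Pi.mul_def] using h2)]
    simp
  calc (∫ ω, ⟪h ω, e ω⟫ ∂P) = ∫ ω, ∑ i, h ω i * e ω i ∂P := by simp_rw [hinteq]
    _ = ∑ i, ∫ ω, h ω i * e ω i ∂P := integral_finset_sum _ (fun i _ => hint i)
    _ = 0 := by simp [hzero]

/-- Orthogonality with truncation: if the sum `⟪h₁,e₁⟫+⟪h₂,e₂⟫` is integrable (even if the
individual terms are not), its integral vanishes. -/
lemma integral_inner_add_inner_zero (hm : m ≤ m0)
    {h₁ h₂ e₁ e₂ : Ω → EuclideanSpace ℝ (Fin n)}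
    (hh₁ : StronglyMeasurable[m] h₁) (hh₂ : StronglyMeasurable[m] h₂)
    (he₁ : Integrable e₁ P) (he₂ : Integrable e₂ P)
    (h10 : P[e₁|m] =ᵐ[P] 0) (h20 : P[e₂|m] =ᵐ[P] 0)
    (hint : Integrable (fun ω => ⟪h₁ ω, e₁ ω⟫ + ⟪h₂ ω, e₂ ω⟫) P) :
    (∫ ω, (⟪h₁ ω, e₁ ω⟫ + ⟪h₂ ω, e₂ ω⟫) ∂P) = 0 := by
  set f : Ω → ℝ := fun ω => ⟪h₁ ω, e₁ ω⟫ + ⟪h₂ ω, e₂ ω⟫ with hf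
  set S : ℕ → Set Ω := fun N => {ω | ‖h₁ ω‖ + ‖h₂ ω‖ ≤ (N : ℝ)} with hS
  have hSmeas : ∀ N, MeasurableSet[m] (S N) := by
    intro N
    exact measurableSet_le (hh₁.norm.add hh₂.norm).measurable measurable_const
  have hbd : ∀ N (ω : Ω), ‖(S N).indicator h₁ ω‖ ≤ (N : ℝ) ∧ ‖(S N).indicator h₂ ω‖ ≤ (N : ℝ) := by
    intro N ω
    by_cases hω : ω ∈ S N
    · have h1 : ‖h₁ ω‖ + ‖h₂ ω‖ ≤ (N : ℝ) := hω
      constructor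
      · rw [Set.indicator_of_mem hω]
        nlinarith [norm_nonneg (h₂ ω)]
      · rw [Set.indicator_of_mem hω]
        nlinarith [norm_nonneg (h₁ ω)]
    · constructor <;> · rw [Set.indicator_of_notMem hω]; simp
  have heq : ∀ N (ω : Ω), (S N).indicator f ω =
      ⟪(S N).indicator h₁ ω, e₁ ω⟫ + ⟪(S N).indicator h₂ ω, e₂ ω⟫ := by
    intro N ω
    by_cases hω : ω ∈ S N
    · simp [Set.indicator_of_mem hω, hf]
    · simp [Set.indicator_of_notMem hω]
  have hmeas1 : ∀ N, StronglyMeasurable[m] ((S N).indicator h₁) :=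
    fun N => hh₁.indicator (hSmeas N)
  have hmeas2 : ∀ N, StronglyMeasurable[m] ((S N).indicator h₂) :=
    fun N => hh₂.indicator (hSmeas N)
  have hint1 : ∀ N, Integrable (fun ω => ⟪(S N).indicator h₁ ω, e₁ ω⟫) P := by
    intro N
    refine (he₁.norm.const_mul (N : ℝ)).mono'
      (((hmeas1 N).mono hm).aestronglyMeasurable.inner he₁.1)
      (Eventually.of_forall fun ω => ?_)
    calc ‖⟪(S N).indicator h₁ ω, e₁ ω⟫‖ ≤ ‖(S N).indicator h₁ ω‖ * ‖e₁ ω‖ := norm_inner_le_norm _ _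
      _ ≤ (N : ℝ) * ‖e₁ ω‖ := mul_le_mul_of_nonneg_right (hbd N ω).1 (norm_nonneg _)
  have hint2 : ∀ N, Integrable (fun ω => ⟪(S N).indicator h₂ ω, e₂ ω⟫) P := by
    intro N
    refine (he₂.norm.const_mul (N : ℝ)).mono'
      (((hmeas2 N).mono hm).aestronglyMeasurable.inner he₂.1)
      (Eventually.of_forall fun ω => ?_)
    calc ‖⟪(S N).indicator h₂ ω, e₂ ω⟫‖ ≤ ‖(S N).indicator h₂ ω‖ * ‖e₂ ω‖ := norm_inner_le_norm _ _
      _ ≤ (N : ℝ) * ‖e₂ ω‖ := mul_le_mul_of_nonneg_right (hbd N ω).2 (norm_nonneg _)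
  have hzero : ∀ N, (∫ ω, (S N).indicator f ω ∂P) = 0 := by
    intro N
    rw [integral_congr_ae (Eventually.of_forall (heq N)), integral_add (hint1 N) (hint2 N),
      integral_inner_bdd_zero hm (hmeas1 N) (fun ω => (hbd N ω).1) he₁ h10,
      integral_inner_bdd_zero hm (hmeas2 N) (fun ω => (hbd N ω).2) he₂ h20, add_zero]
  have htend : Tendsto (fun N : ℕ => ∫ ω, (S N).indicator f ω ∂P) atTop (nhds (∫ ω, f ω ∂P)) := by
    refine tendsto_integral_of_dominated_convergence (fun ω => |f ω|) ?_ hint.abs ?_ ?_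
    · exact fun N => hint.1.indicator (hm _ (hSmeas N))
    · intro N
      refine Eventually.of_forall fun ω => ?_
      rw [Real.norm_eq_abs]
      by_cases hω : ω ∈ S N
      · rw [Set.indicator_of_mem hω]
      · rw [Set.indicator_of_notMem hω]; simp [abs_nonneg]
    · refine Eventually.of_forall fun ω => ?_
      have hev : ∀ᶠ N : ℕ in atTop, (S N).indicator f ω = f ω := by
        filter_upwards [eventually_ge_atTop ⌈‖h₁ ω‖ + ‖h₂ ω‖⌉₊] with N hN
        refine Set.indicator_of_mem ?_ f
        show ‖h₁ ω‖ + ‖h₂ ω‖ ≤ (N : ℝ)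
        exact le_trans (Nat.le_ceil _) (by exact_mod_cast hN)
      exact Tendsto.congr' (hev.mono fun N h => h.symm) tendsto_const_nhds
  have htend0 : Tendsto (fun _ : ℕ => (0 : ℝ)) atTop (nhds (∫ ω, f ω ∂P)) :=
    Tendsto.congr (fun N => hzero N) htend
  exact tendsto_nhds_unique htend0 tendsto_const_nhds

/-- Single-inner-product version of the orthogonality lemma. -/
lemma integral_inner_zero (hm : m ≤ m0)
    {h e : Ω → EuclideanSpace ℝ (Fin n)}
    (hh : StronglyMeasurable[m] h) (he : Integrable e P) (he0 : P[e|m] =ᵐ[P] 0)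
    (hint : Integrable (fun ω => ⟪h ω, e ω⟫) P) :
    (∫ ω, ⟪h ω, e ω⟫ ∂P) = 0 := by
  have h0 : P[(fun _ : Ω => (0 : EuclideanSpace ℝ (Fin n)))|m] =ᵐ[P] 0 := by
    rw [show (fun _ : Ω => (0 : EuclideanSpace ℝ (Fin n))) = (0 : Ω → EuclideanSpace ℝ (Fin n))
      from rfl, condExp_zero]
  have key := integral_inner_add_inner_zero hm hh (stronglyMeasurable_const (b := (0 :
    EuclideanSpace ℝ (Fin n)))) he (integrable_const 0) he0 h0
    (hint.congr (Eventually.of_forall fun ω => by simp))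
  simpa using key

/-- Derivative-at-zero lemma for quadratic families, robust to non-integrability. -/
lemma quad_hasDerivAt (C₀ C₁ C₂ : Ω → ℝ) (h₀ : Integrable C₀ P) (h₀0 : (∫ ω, C₀ ω ∂P) = 0)
    (h₁0 : Integrable C₁ P → (∫ ω, C₁ ω ∂P) = 0) :
    HasDerivAt (fun r : ℝ => ∫ ω, (C₀ ω - r * C₁ ω + r ^ 2 * C₂ ω) ∂P) 0 0 := by
  suffices h : ∃ c : ℝ, ∀ᶠ r in nhds (0 : ℝ),
      (∫ ω, (C₀ ω - r * C₁ ω + r ^ 2 * C₂ ω) ∂P) = c * r ^ 2 by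
    obtain ⟨c, hc⟩ := h
    have hd : HasDerivAt (fun r : ℝ => c * r ^ 2) 0 0 := by
      simpa using (hasDerivAt_pow 2 (0 : ℝ)).const_mul c
    exact hd.congr_of_eventuallyEq hc
  by_cases hI₁ : Integrable C₁ P <;> by_cases hI₂ : Integrable C₂ P
  · refine ⟨∫ ω, C₂ ω ∂P, Eventually.of_forall fun r => ?_⟩
    have e1 : Integrable (fun ω => C₀ ω - r * C₁ ω) P := h₀.sub (hI₁.const_mul r)
    have e2 : Integrable (fun ω => r ^ 2 * C₂ ω) P := hI₂.const_mul _
    have e3 : Integrable (fun ω => r * C₁ ω) P := hI₁.const_mul r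
    rw [integral_add e1 e2, integral_sub h₀ e3, integral_const_mul, integral_const_mul,
      h₀0, h₁0 hI₁]
    ring
  · refine ⟨0, Eventually.of_forall fun r => ?_⟩
    rcases eq_or_ne r 0 with rfl | hr
    · simpa using h₀0
    · rw [integral_undef, zero_mul]
      intro h
      refine hI₂ ?_
      have h2 := (((h.sub h₀).add (hI₁.const_mul r)).const_mul (r ^ 2)⁻¹)
      refine h2.congr (Eventually.of_forall fun ω => ?_)
      simp only [Pi.add_apply, Pi.sub_apply]
      field_simp
      try ring
  · refine ⟨0, Eventually.of_forall fun r => ?_⟩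
    rcases eq_or_ne r 0 with rfl | hr
    · simpa using h₀0
    · rw [integral_undef, zero_mul]
      intro h
      refine hI₁ ?_
      have h2 := (((h₀.add (hI₂.const_mul (r ^ 2))).sub h).const_mul r⁻¹)
      refine h2.congr (Eventually.of_forall fun ω => ?_)
      simp only [Pi.add_apply, Pi.sub_apply]
      field_simp
      try ring
  · by_cases hs : ∃ s : ℝ, s ≠ 0 ∧ Integrable (fun ω => C₁ ω - s * C₂ ω) P
    · obtain ⟨s, hs0, hsI⟩ := hs
      refine ⟨0, Metric.eventually_nhds_iff.2 ⟨|s|, abs_pos.2 hs0, fun {r} hrs => ?_⟩⟩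
      rw [Real.dist_eq, sub_zero] at hrs
      rcases eq_or_ne r 0 with rfl | hr
      · simpa using h₀0
      · rw [integral_undef, zero_mul]
        intro h
        have h1 : Integrable (fun ω => C₁ ω - r * C₂ ω) P := by
          have h2 := ((h.sub h₀).const_mul (-r⁻¹))
          refine h2.congr (Eventually.of_forall fun ω => ?_)
          simp only [Pi.add_apply, Pi.sub_apply]
          field_simp
          try ring
        refine hI₂ ?_
        have hsr : s - r ≠ 0 := by
          intro hh
          have hsr' : s = r := by linarith
          rw [hsr'] at hrs
          exact absurd hrs (lt_irrefl _)
        have h3 := ((h1.sub hsI).const_mul (s - r)⁻¹)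
        refine h3.congr (Eventually.of_forall fun ω => ?_)
        simp only [Pi.add_apply, Pi.sub_apply]
        field_simp
        try ring
    · push_neg at hs
      refine ⟨0, Eventually.of_forall fun r => ?_⟩
      rcases eq_or_ne r 0 with rfl | hr
      · simpa using h₀0
      · rw [integral_undef, zero_mul]
        intro h
        refine hs r hr ?_
        have h2 := ((h.sub h₀).const_mul (-r⁻¹))
        refine h2.congr (Eventually.of_forall fun ω => ?_)
        simp only [Pi.add_apply, Pi.sub_apply]
        field_simp
        try ring

end NeymanAux

/-- The action of the matrix `A` on vectors, `A.mulVec`, viewed as a map of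
`EuclideanSpace ℝ (Fin n)` (it is definitionally `A.mulVec`). -/
noncomputable def mulVecE {n : ℕ} (A : Matrix (Fin n) (Fin n) ℝ)
    (v : EuclideanSpace ℝ (Fin n)) : EuclideanSpace ℝ (Fin n) :=
  WithLp.toLp 2 (A.mulVec v)

/-- `mulVecE A` as a continuous linear map on `EuclideanSpace ℝ (Fin n)`. -/
noncomputable def mulVecCLM {n : ℕ} (A : Matrix (Fin n) (Fin n) ℝ) :
    EuclideanSpace ℝ (Fin n) →L[ℝ] EuclideanSpace ℝ (Fin n) :=
  LinearMap.toContinuousLinearMap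
    { toFun := mulVecE A
      map_add' := fun x y => by simp [mulVecE, Matrix.mulVec_add]
      map_smul' := fun c x => by simp [mulVecE, Matrix.mulVec_smul] }

lemma mulVecCLM_apply {n : ℕ} (A : Matrix (Fin n) (Fin n) ℝ) (v : EuclideanSpace ℝ (Fin n)) :
    mulVecCLM A v = mulVecE A v := rfl

/-- Neyman orthogonality. In the partially linear network model, for
`𝒢`-measurable square-integrable nuisance candidates `m, ℓ`, both coordinates of
`r ↦ E[ψ(θ₀, α₀, m₀ + r•(m − m₀), ℓ₀ + r•(ℓ − ℓ₀))]` have derivative `0` at `r = 0`. -/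
theorem neyman_orthogonality
    {Ω : Type*} {ℱ : MeasurableSpace Ω} {P : Measure Ω} [IsProbabilityMeasure P]
    {n : ℕ} (A : Matrix (Fin n) (Fin n) ℝ)
    (𝒢 ℋ : MeasurableSpace Ω) (h𝒢ℋ : 𝒢 ≤ ℋ) (hℋℱ : ℋ ≤ ℱ)
    (T g εY Y : Ω → EuclideanSpace ℝ (Fin n)) (θ₀ α₀ : ℝ)
    (hT_meas : StronglyMeasurable[ℋ] T) (hT_int : Integrable T P)
    (hg_meas : StronglyMeasurable[𝒢] g) (hg_int : Integrable g P)
    (hεY_int : Integrable εY P)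
    (hεY_cond : P[εY|ℋ] =ᵐ[P] 0)
    (hY : Y = θ₀ • T + α₀ • (fun ω => mulVecE A (T ω)) + g + εY)
    (hεY_sq : MemLp εY 2 P)
    (hεT_sq : MemLp (T - P[T|𝒢]) 2 P)
    (hAεT_sq : MemLp (fun ω => mulVecE A ((T - P[T|𝒢]) ω)) 2 P)
    (m ℓ : Ω → EuclideanSpace ℝ (Fin n))
    (hm_meas : StronglyMeasurable[𝒢] m) (hm_sq : MemLp m 2 P)
    (hℓ_meas : StronglyMeasurable[𝒢] ℓ) (hℓ_sq : MemLp ℓ 2 P) :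
    HasDerivAt
      (fun r : ℝ => ∫ ω,
        ⟪(Y - (P[Y|𝒢] + r • (ℓ - P[Y|𝒢]))
            - θ₀ • (T - (P[T|𝒢] + r • (m - P[T|𝒢])))
            - α₀ • (fun ω' => mulVecE A ((T - (P[T|𝒢] + r • (m - P[T|𝒢]))) ω'))) ω,
          (T - (P[T|𝒢] + r • (m - P[T|𝒢]))) ω⟫ ∂P)
      0 0 ∧
    HasDerivAt
      (fun r : ℝ => ∫ ω,
        ⟪(Y - (P[Y|𝒢] + r • (ℓ - P[Y|𝒢]))
            - θ₀ • (T - (P[T|𝒢] + r • (m - P[T|𝒢])))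
            - α₀ • (fun ω' => mulVecE A ((T - (P[T|𝒢] + r • (m - P[T|𝒢]))) ω'))) ω,
          mulVecE A ((T - (P[T|𝒢] + r • (m - P[T|𝒢]))) ω)⟫ ∂P)
      0 0 := by
  have hℱ' : 𝒢 ≤ ℱ := h𝒢ℋ.trans hℋℱ
  -- helper rewriting rules for the matrix action
  have hA_sub : ∀ x y : EuclideanSpace ℝ (Fin n),
      mulVecE A (x - y) = mulVecE A x - mulVecE A y := fun x y => map_sub (mulVecCLM A) x y
  have hA_add : ∀ x y : EuclideanSpace ℝ (Fin n),
      mulVecE A (x + y) = mulVecE A x + mulVecE A y := fun x y => map_add (mulVecCLM A) x y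
  have hA_smul : ∀ (c : ℝ) (x : EuclideanSpace ℝ (Fin n)),
      mulVecE A (c • x) = c • mulVecE A x := fun c x => map_smul (mulVecCLM A) c x
  -- basic integrability
  have hAT_int : Integrable (fun ω => mulVecE A (T ω)) P := (mulVecCLM A).integrable_comp hT_int
  have hεT_int : Integrable (fun ω => T ω - (P[T|𝒢]) ω) P := hT_int.sub integrable_condExp
  have hAεT_int : Integrable (fun ω => mulVecE A (T ω - (P[T|𝒢]) ω)) P :=
    (mulVecCLM A).integrable_comp hεT_int
  -- conditional expectation facts
  have hεY𝒢 : P[εY|𝒢] =ᵐ[P] 0 := by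
    refine ((condExp_condExp_of_le h𝒢ℋ hℋℱ).symm.trans ((condExp_congr_ae hεY_cond).trans ?_))
    rw [condExp_zero]
  have hεT𝒢 : P[T - P[T|𝒢]|𝒢] =ᵐ[P] 0 := by
    have h1 := condExp_sub (μ := P) (m := 𝒢) hT_int
      (integrable_condExp (μ := P) (m := 𝒢) (f := T))
    have h2 : P[P[T|𝒢]|𝒢] = P[T|𝒢] :=
      condExp_of_stronglyMeasurable hℱ' stronglyMeasurable_condExp integrable_condExp
    refine h1.trans ?_
    rw [h2]
    filter_upwards with ω
    simp
  have hAεT𝒢 : P[(fun ω => mulVecE A (T ω - (P[T|𝒢]) ω))|𝒢] =ᵐ[P] 0 := by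
    have h1 : P[(fun ω => mulVecCLM A ((T - P[T|𝒢]) ω))|𝒢]
        =ᵐ[P] fun ω => mulVecCLM A ((P[T - P[T|𝒢]|𝒢]) ω) :=
      condexp_comp_clm hℱ' (mulVecCLM A) (hT_int.sub integrable_condExp)
    refine h1.trans ?_
    filter_upwards [hεT𝒢] with ω hω
    rw [Pi.zero_apply]
    show mulVecCLM A ((P[T - P[T|𝒢]|𝒢]) ω) = 0
    rw [hω]
    exact map_zero _
  -- the conditional expectation of Y
  have hℓ₀ : (P[Y|𝒢]) =ᵐ[P] fun ω => θ₀ • (P[T|𝒢]) ω + α₀ • mulVecE A ((P[T|𝒢]) ω) + g ω := by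
    rw [hY]
    have c1 := condExp_add (μ := P) (m := 𝒢)
      (((hT_int.smul θ₀).add (hAT_int.smul α₀)).add hg_int) hεY_int
    have c2 := condExp_add (μ := P) (m := 𝒢) ((hT_int.smul θ₀).add (hAT_int.smul α₀)) hg_int
    have c3 := condExp_add (μ := P) (m := 𝒢) (hT_int.smul θ₀) (hAT_int.smul α₀)
    have c4 := condExp_smul (μ := P) (m := 𝒢) θ₀ T
    have c5 := condExp_smul (μ := P) (m := 𝒢) α₀ (fun ω => mulVecE A (T ω))
    have c6 : P[(fun ω => mulVecE A (T ω))|𝒢] =ᵐ[P] fun ω => mulVecE A ((P[T|𝒢]) ω) :=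
      condexp_comp_clm hℱ' (mulVecCLM A) hT_int
    have c7 : P[g|𝒢] = g := condExp_of_stronglyMeasurable hℱ' hg_meas hg_int
    filter_upwards [c1, c2, c3, c4, c5, c6, hεY𝒢] with ω w1 w2 w3 w4 w5 w6 w7
    rw [w1]
    simp only [Pi.add_apply]
    rw [w2]
    simp only [Pi.add_apply]
    rw [w3]
    simp only [Pi.add_apply]
    rw [w4, w5, c7, w7]
    simp only [Pi.smul_apply, Pi.zero_apply, add_zero]
    rw [w6]
  -- residual functions
  set U : Ω → EuclideanSpace ℝ (Fin n) := fun ω =>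
    Y ω - (P[Y|𝒢]) ω - θ₀ • (T ω - (P[T|𝒢]) ω) - α₀ • mulVecE A (T ω - (P[T|𝒢]) ω) with hUdef
  set V : Ω → EuclideanSpace ℝ (Fin n) := fun ω =>
    (ℓ ω - (P[Y|𝒢]) ω) - θ₀ • (m ω - (P[T|𝒢]) ω) - α₀ • mulVecE A (m ω - (P[T|𝒢]) ω) with hVdef
  have hU : U =ᵐ[P] εY := by
    filter_upwards [hℓ₀] with ω hw
    show Y ω - (P[Y|𝒢]) ω - θ₀ • (T ω - (P[T|𝒢]) ω) - α₀ • mulVecE A (T ω - (P[T|𝒢]) ω) = εY ω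
    have hYω : Y ω = θ₀ • T ω + α₀ • mulVecE A (T ω) + g ω + εY ω := by rw [hY]; rfl
    rw [hYω, hw, hA_sub]
    module
  have hU_int : Integrable U P := hεY_int.congr hU.symm
  have hU𝒢 : P[U|𝒢] =ᵐ[P] 0 := (condExp_congr_ae hU).trans hεY𝒢
  have hV_meas : StronglyMeasurable[𝒢] V := by
    have h1 : StronglyMeasurable[𝒢] (fun ω => ℓ ω - (P[Y|𝒢]) ω) :=
      hℓ_meas.sub stronglyMeasurable_condExp
    have h2 : StronglyMeasurable[𝒢] (fun ω => θ₀ • (m ω - (P[T|𝒢]) ω)) :=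
      (hm_meas.sub stronglyMeasurable_condExp).const_smul θ₀
    have h3 : StronglyMeasurable[𝒢] (fun ω => α₀ • mulVecE A (m ω - (P[T|𝒢]) ω)) :=
      ((mulVecCLM A).continuous.comp_stronglyMeasurable
        (hm_meas.sub stronglyMeasurable_condExp)).const_smul α₀
    exact (h1.sub h2).sub h3
  -- main abstract step
  have MAIN : ∀ W X : Ω → EuclideanSpace ℝ (Fin n),
      MemLp W 2 P → StronglyMeasurable[ℋ] W → Integrable W P → (P[W|𝒢] =ᵐ[P] 0) →
      StronglyMeasurable[𝒢] X →
      HasDerivAt (fun r : ℝ => ∫ ω, ⟪U ω - r • V ω, W ω - r • X ω⟫ ∂P) 0 0 := by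
    intro W X hW2 hWmeas hWint hW𝒢 hXmeas
    have hfun : (fun r : ℝ => ∫ ω, ⟪U ω - r • V ω, W ω - r • X ω⟫ ∂P)
        = fun r : ℝ => ∫ ω, ((fun ω => ⟪U ω, W ω⟫) ω
            - r * ((fun ω => ⟪U ω, X ω⟫ + ⟪V ω, W ω⟫) ω)
            + r ^ 2 * ((fun ω => ⟪V ω, X ω⟫) ω)) ∂P := by
      funext r
      refine integral_congr_ae (Eventually.of_forall fun ω => ?_)
      simp only [inner_sub_left, inner_sub_right, real_inner_smul_left, real_inner_smul_right]
      ring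
    rw [hfun]
    apply quad_hasDerivAt
    · exact (integrable_inner_of_memL2 hεY_sq hW2).congr
        (by filter_upwards [hU] with ω h; rw [h])
    · rw [integral_congr_ae (g := fun ω => ⟪W ω, εY ω⟫)
        (by filter_upwards [hU] with ω h; rw [h, real_inner_comm])]
      exact integral_inner_zero hℋℱ hWmeas hεY_int hεY_cond
        (integrable_inner_of_memL2 hW2 hεY_sq)
    · intro hI
      rw [integral_congr_ae (g := fun ω => ⟪X ω, U ω⟫ + ⟪V ω, W ω⟫)
        (Eventually.of_forall fun ω => by
          beta_reduce
          rw [real_inner_comm (U ω) (X ω)])]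
      exact integral_inner_add_inner_zero hℱ' hXmeas hV_meas hU_int hWint hU𝒢 hW𝒢
        (hI.congr (Eventually.of_forall fun ω => by
          beta_reduce
          rw [real_inner_comm (U ω) (X ω)]))
  -- apply MAIN to the two coordinates
  have hW1_2 : MemLp (fun ω => T ω - (P[T|𝒢]) ω) 2 P := hεT_sq
  have hW1_meas : StronglyMeasurable[ℋ] (fun ω => T ω - (P[T|𝒢]) ω) :=
    hT_meas.sub (stronglyMeasurable_condExp.mono h𝒢ℋ)
  have hW1𝒢 : P[(fun ω => T ω - (P[T|𝒢]) ω)|𝒢] =ᵐ[P] 0 := hεT𝒢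
  have hW2_2 : MemLp (fun ω => mulVecE A (T ω - (P[T|𝒢]) ω)) 2 P := hAεT_sq
  have hW2_meas : StronglyMeasurable[ℋ] (fun ω => mulVecE A (T ω - (P[T|𝒢]) ω)) :=
    (mulVecCLM A).continuous.comp_stronglyMeasurable hW1_meas
  have hX1_meas : StronglyMeasurable[𝒢] (fun ω => m ω - (P[T|𝒢]) ω) :=
    hm_meas.sub stronglyMeasurable_condExp
  have hX2_meas : StronglyMeasurable[𝒢] (fun ω => mulVecE A (m ω - (P[T|𝒢]) ω)) :=
    (mulVecCLM A).continuous.comp_stronglyMeasurable hX1_meas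
  have hres : ∀ (r : ℝ) (ω : Ω),
      (Y - (P[Y|𝒢] + r • (ℓ - P[Y|𝒢])) - θ₀ • (T - (P[T|𝒢] + r • (m - P[T|𝒢])))
        - α₀ • (fun ω' => mulVecE A ((T - (P[T|𝒢] + r • (m - P[T|𝒢]))) ω'))) ω
      = U ω - r • V ω := by
    intro r ω
    simp only [hUdef, hVdef, Pi.sub_apply, Pi.add_apply, Pi.smul_apply]
    simp only [hA_sub, hA_add, hA_smul]
    module
  have harg : ∀ (r : ℝ) (ω : Ω),
      (T - (P[T|𝒢] + r • (m - P[T|𝒢]))) ω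
      = (fun ω => T ω - (P[T|𝒢]) ω) ω - r • (fun ω => m ω - (P[T|𝒢]) ω) ω := by
    intro r ω
    simp only [Pi.sub_apply, Pi.add_apply, Pi.smul_apply]
    module
  have hargA : ∀ (r : ℝ) (ω : Ω),
      mulVecE A ((T - (P[T|𝒢] + r • (m - P[T|𝒢]))) ω)
      = (fun ω => mulVecE A (T ω - (P[T|𝒢]) ω)) ω
        - r • (fun ω => mulVecE A (m ω - (P[T|𝒢]) ω)) ω := by
    intro r ω
    simp only [Pi.sub_apply, Pi.add_apply, Pi.smul_apply]
    simp only [hA_sub, hA_add, hA_smul]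
    module
  constructor
  · have h1 := MAIN _ _ hW1_2 hW1_meas hεT_int hW1𝒢 hX1_meas
    refine h1.congr_of_eventuallyEq (Eventually.of_forall fun r => ?_)
    refine integral_congr_ae (Eventually.of_forall fun ω => ?_)
    beta_reduce
    rw [hres r ω, harg r ω]
  · have h2 := MAIN _ _ hW2_2 hW2_meas hAεT_int hAεT𝒢 hX2_meas
    refine h2.congr_of_eventuallyEq (Eventually.of_forall fun r => ?_)
    refine integral_congr_ae (Eventually.of_forall fun ω => ?_)
    beta_reduce
    rw [hres r ω, hargA r ω]
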